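/- Let L be a Hausdorff first countable topological space such that L^ω is c.c.c. Then for every cardinal κ the product space L^κ has open disjoint tightness. -/

import Mathlib

open Set Filter TopologicalSpace
open scoped Topology

/-- A space is c.c.c. if every family of pairwise disjoint nonempty open sets is countable. -/
def CCC (X : Type*) [TopologicalSpace X] : Prop :=
  ∀ 𝒰 : Set (Set X), (∀ U ∈ 𝒰, IsOpen U ∧ U.Nonempty) →
    𝒰.Pairwise (fun U V => Disjoint U V) → 𝒰.Countable

/-- A space has open disjoint tightness (ODT) if every accumulation point of an open set `U`
is an accumulation point of two disjoint open subsets of `U`. -/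
def HasODT (X : Type*) [TopologicalSpace X] : Prop :=
  ∀ U : Set X, IsOpen U → ∀ x : X, AccPt x (𝓟 U) →
    ∃ U₁ U₂ : Set X, IsOpen U₁ ∧ IsOpen U₂ ∧ U₁ ⊆ U ∧ U₂ ⊆ U ∧ U₁ ∩ U₂ = ∅ ∧
      AccPt x (𝓟 U₁) ∧ AccPt x (𝓟 U₂)

/-- A finite set contained in a monotone union is contained in one of the stages. -/
lemma finset_subset_of_monotone_iUnion {α : Type*} {J : ℕ → Set α} (hJ : Monotone J)
    (F : Finset α) (h : (F : Set α) ⊆ ⋃ n, J n) : ∃ n, (F : Set α) ⊆ J n := by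
  classical
  induction F using Finset.induction_on with
  | empty => exact ⟨0, by simp⟩
  | @insert a F ha ih =>
    obtain ⟨n, hn⟩ := ih (fun i hi => h (by
      simp only [Finset.coe_insert]; exact Set.mem_insert_of_mem _ hi))
    obtain ⟨m, hm⟩ := Set.mem_iUnion.1 (h (Finset.mem_coe.2 (Finset.mem_insert_self a F)))
    refine ⟨max n m, fun i hi => ?_⟩
    rcases Finset.mem_insert.1 (Finset.mem_coe.1 hi) with rfl | hi'
    · exact hJ (le_max_right n m) hm
    · exact hJ (le_max_left n m) (hn hi')

/-- The abstract splitting lemma: if `x : X` maps to a first-countable Hausdorff space `Y`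
via `r` (with a continuous section `e` fixing `x`), and `S` is an `r`-cylindrical open set
avoiding the fiber of `x` whose `r`-image accumulates at `r x`, then `S` contains two
disjoint open sets both accumulating at `x`. -/
lemma splitting_lemma {X Y : Type*} [TopologicalSpace X] [TopologicalSpace Y] [T2Space Y]
    [FirstCountableTopology Y] {r : X → Y} {e : Y → X} (hr : Continuous r) (he : Continuous e)
    (hre : ∀ v, r (e v) = v) (x : X) (hex : e (r x) = x) {S : Set X} (hSopen : IsOpen S)
    (hdense : ∀ W : Set Y, IsOpen W → r x ∈ W → ∃ p ∈ S, r p ∈ W)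
    (hne : ∀ p ∈ S, r p ≠ r x)
    (hcyl : ∀ p q : X, r p = r q → p ∈ S → q ∈ S) :
    ∃ U₁ U₂ : Set X, IsOpen U₁ ∧ IsOpen U₂ ∧ U₁ ⊆ S ∧ U₂ ⊆ S ∧ U₁ ∩ U₂ = ∅ ∧
      AccPt x (𝓟 U₁) ∧ AccPt x (𝓟 U₂) := by
  obtain ⟨W, hW⟩ := (𝓝 (r x)).exists_antitone_basis
  have hzW : ∀ m, r x ∈ interior (W m) := fun m =>
    mem_interior_iff_mem_nhds.2 (hW.toHasBasis.mem_of_mem trivial)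
  have step : ∀ m : ℕ, ∃ (p : X) (C' N' : Set Y) (m' : ℕ),
      p ∈ S ∧ r p ∈ interior (W m) ∧ IsOpen C' ∧ r p ∈ C' ∧ Disjoint C' N' ∧
      m + 1 ≤ m' ∧ W m' ⊆ N' := by
    intro m
    obtain ⟨p, hpS, hpW⟩ := hdense (interior (W m)) isOpen_interior (hzW m)
    obtain ⟨C', N', hC'o, hN'o, hpC, hzN, hd⟩ := t2_separation (hne p hpS)
    obtain ⟨j, -, hj⟩ := hW.toHasBasis.mem_iff.1 (hN'o.mem_nhds hzN)
    exact ⟨p, C', N', max j (m + 1), hpS, hpW, hC'o, hpC, hd, le_max_right _ _,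
      (hW.antitone (le_max_left _ _)).trans hj⟩
  choose p C' N' μ hpS hpW hC'o hpC hd hμ hWN using step
  -- the recursively defined sequence of indices
  set mseq : ℕ → ℕ := fun k => Nat.rec 0 (fun _ prev => μ prev) k with hmseq
  have hsucc : ∀ k, mseq (k + 1) = μ (mseq k) := fun k => rfl
  have hmono : StrictMono mseq := strictMono_nat_of_lt_succ (fun k => by
    have h := hμ (mseq k); rw [hsucc]; omega)
  have hk_le : ∀ k, k ≤ mseq k := fun k => hmono.le_apply
  set C : ℕ → Set X := fun k =>
    r ⁻¹' C' (mseq k) ∩ (r ⁻¹' interior (W (mseq k)) ∩ S) with hC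
  have hCopen : ∀ k, IsOpen (C k) := fun k =>
    ((hC'o _).preimage hr).inter ((isOpen_interior.preimage hr).inter hSopen)
  have hCsub : ∀ k, C k ⊆ S := fun k u hu => hu.2.2
  have hCdisj : ∀ j k, j < k → ∀ u, u ∈ C j → u ∈ C k → False := by
    intro j k hjk u huj huk
    have h1 : r u ∈ W (mseq k) := interior_subset huk.2.1
    have h2 : W (mseq k) ⊆ W (μ (mseq j)) := by
      rw [← hsucc]; exact hW.antitone (hmono.monotone (Nat.succ_le_of_lt hjk))
    have h3 : r u ∈ N' (mseq j) := hWN _ (h2 h1)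
    exact Set.disjoint_left.1 (hd (mseq j)) huj.1 h3
  set q : ℕ → X := fun k => e (r (p (mseq k))) with hq
  have hrq : ∀ k, r (q k) = r (p (mseq k)) := fun k => hre _
  have hqS : ∀ k, q k ∈ S := fun k => hcyl _ _ (hrq k).symm (hpS _)
  have hqC : ∀ k, q k ∈ C k := fun k =>
    ⟨by rw [Set.mem_preimage, hrq]; exact hpC _,
     by rw [Set.mem_preimage, hrq]; exact hpW _, hqS k⟩
  have hqx : ∀ k, q k ≠ x := fun k h => hne (q k) (hqS k) (by rw [h])
  have hqtend : Filter.Tendsto q Filter.atTop (𝓝 x) := by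
    have h1 : Filter.Tendsto (fun k => r (p (mseq k))) Filter.atTop (𝓝 (r x)) := by
      rw [hW.toHasBasis.tendsto_right_iff]
      intro j _
      filter_upwards [Filter.eventually_ge_atTop j] with k hk
      exact hW.antitone (hk.trans (hk_le k)) (interior_subset (hpW (mseq k)))
    have h2 := (he.tendsto (r x)).comp h1
    rw [hex] at h2
    exact h2
  have hNfind : ∀ N ∈ 𝓝 x, ∃ k₀, ∀ k ≥ k₀, q k ∈ N := by
    intro N hN
    exact Filter.eventually_atTop.1 (hqtend.eventually (Filter.eventually_of_mem hN fun y hy => hy))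
  refine ⟨⋃ k, C (2 * k), ⋃ k, C (2 * k + 1), isOpen_iUnion fun k => hCopen (2 * k),
    isOpen_iUnion fun k => hCopen (2 * k + 1), Set.iUnion_subset fun k => hCsub (2 * k),
    Set.iUnion_subset fun k => hCsub (2 * k + 1), ?_, ?_, ?_⟩
  · apply Set.eq_empty_iff_forall_notMem.2
    rintro u ⟨h1, h2⟩
    obtain ⟨a, ha⟩ := Set.mem_iUnion.1 h1
    obtain ⟨b, hb⟩ := Set.mem_iUnion.1 h2
    rcases lt_trichotomy (2 * a) (2 * b + 1) with h | h | h
    · exact hCdisj _ _ h u ha hb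
    · omega
    · exact hCdisj _ _ h u hb ha
  · rw [accPt_iff_nhds]
    intro N hN
    obtain ⟨k₀, hk₀⟩ := hNfind N hN
    exact ⟨q (2 * k₀), ⟨hk₀ (2 * k₀) (by omega), Set.mem_iUnion.2 ⟨k₀, hqC (2 * k₀)⟩⟩, hqx (2 * k₀)⟩
  · rw [accPt_iff_nhds]
    intro N hN
    obtain ⟨k₀, hk₀⟩ := hNfind N hN
    exact ⟨q (2 * k₀ + 1), ⟨hk₀ (2 * k₀ + 1) (by omega), Set.mem_iUnion.2 ⟨k₀, hqC (2 * k₀ + 1)⟩⟩,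
      hqx (2 * k₀ + 1)⟩

/-- Lemma 17: if `L` is a Hausdorff first countable space and `L^ω` is c.c.c., then every
power `L^ι` has open disjoint tightness. -/
theorem stmt_16 (L : Type*) [TopologicalSpace L] [T2Space L]
    [FirstCountableTopology L] (hccc : CCC (ℕ → L)) (ι : Type*) :
    HasODT (ι → L) := by
  classical
  intro U hU x hx
  rw [accPt_iff_nhds] at hx
  -- Step 1: around every point of `U` other than `x` choose an open box inside `U`
  -- avoiding `x` at one coordinate.
  have box : ∀ y : ι → L, y ∈ U → y ≠ x → ∃ (s : Finset ι) (O : ι → Set L),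
      (∀ i, IsOpen (O i)) ∧ y ∈ (s : Set ι).pi O ∧ (s : Set ι).pi O ⊆ U ∧
      ∃ i₀ ∈ s, ∀ w ∈ (s : Set ι).pi O, w i₀ ≠ x i₀ := by
    intro y hyU hyx
    obtain ⟨F, O1, h1, h2⟩ := isOpen_pi_iff.1 hU y hyU
    obtain ⟨i₀, hi₀⟩ := Function.ne_iff.1 hyx
    refine ⟨insert i₀ F,
      fun i => (if i ∈ F then O1 i else Set.univ) ∩ (if i = i₀ then {x i₀}ᶜ else Set.univ),
      ?_, ?_, ?_, i₀, Finset.mem_insert_self _ _, ?_⟩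
    · intro i
      apply IsOpen.inter
      · split_ifs with h
        · exact (h1 i h).1
        · exact isOpen_univ
      · split_ifs with h
        · exact isOpen_compl_singleton
        · exact isOpen_univ
    · intro i _
      constructor
      · split_ifs with h
        · exact (h1 i h).2
        · trivial
      · split_ifs with h
        · subst h; simpa using hi₀
        · trivial
    · intro w hw
      apply h2
      intro i hi
      have h3 := hw i (Finset.mem_coe.2 (Finset.mem_insert_of_mem (Finset.mem_coe.1 hi)))
      have h4 := h3.1
      rwa [if_pos (Finset.mem_coe.1 hi)] at h4
    · intro w hw
      have h3 := (hw i₀ (Finset.mem_coe.2 (Finset.mem_insert_self _ _))).2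
      rw [if_pos rfl] at h3
      simpa using h3
  -- Step 2: for each finite `F ⊆ ι` fix an antitone neighborhood basis of `x∣F`,
  -- and pick points of `U \ {x}` whose restriction lies in each basis element.
  have hbasis : ∀ F : Finset ι, ∃ W : ℕ → Set ((i : ↥F) → L),
      (𝓝 fun i : ↥F => x ↑i).HasAntitoneBasis W := fun F => (𝓝 _).exists_antitone_basis
  choose Wb hWb using hbasis
  have hrF : ∀ F : Finset ι, Continuous (fun (w : ι → L) (i : ↥F) => w ↑i) :=
    fun F => continuous_pi fun i => continuous_apply _
  have hy : ∀ (F : Finset ι) (k : ℕ), ∃ y : ι → L, (y ∈ U ∧ y ≠ x) ∧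
      (fun i : ↥F => y ↑i) ∈ Wb F k := by
    intro F k
    have hmem : Wb F k ∈ 𝓝 (fun i : ↥F => x ↑i) := (hWb F).toHasBasis.mem_of_mem trivial
    have hN : (fun (w : ι → L) (i : ↥F) => w ↑i) ⁻¹' Wb F k ∈ 𝓝 x :=
      (hrF F).continuousAt.preimage_mem_nhds hmem
    obtain ⟨y, ⟨hy1, hy2⟩, hy3⟩ := hx _ hN
    exact ⟨y, ⟨hy2, hy3⟩, hy1⟩
  choose y hyU2 hyW using hy
  choose s O hOopen hymem hsub i₀ hi₀s hi₀ using
    fun F k => box (y F k) (hyU2 F k).1 (hyU2 F k).2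
  -- Step 3: the countable support set Jstar, closed under taking supports of the boxes.
  set J : ℕ → Set ι := fun n => Nat.rec ∅
    (fun _ Jn => Jn ∪ ⋃ (F : Finset ι) (_ : (F : Set ι) ⊆ Jn) (k : ℕ), (s F k : Set ι)) n
    with hJ
  have hJsucc : ∀ n, J (n + 1) =
      J n ∪ ⋃ (F : Finset ι) (_ : (F : Set ι) ⊆ J n) (k : ℕ), (s F k : Set ι) := fun n => rfl
  have hJmono : Monotone J := monotone_nat_of_le_succ fun n => by
    rw [hJsucc]; exact Set.subset_union_left
  have hJcount : ∀ n, (J n).Countable := by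
    intro n
    induction n with
    | zero => exact Set.countable_empty
    | succ n ih =>
      rw [hJsucc]
      refine ih.union ?_
      have hFc : {F : Finset ι | (F : Set ι) ⊆ J n}.Countable := by
        have h1 := Set.countable_setOf_finite_subset ih
        have h2 := h1.preimage (f := fun F : Finset ι => (F : Set ι)) Finset.coe_injective
        refine Set.Countable.mono ?_ h2
        intro F hF
        exact ⟨F.finite_toSet, hF⟩
      exact hFc.biUnion fun F _ => Set.countable_iUnion fun k => (s F k).finite_toSet.countable
  set Jstar : Set ι := ⋃ n, J n with hJstar
  have hJstarc : Jstar.Countable := Set.countable_iUnion hJcount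
  have hclosed : ∀ F : Finset ι, (F : Set ι) ⊆ Jstar → ∀ k, (s F k : Set ι) ⊆ Jstar := by
    intro F hF k
    obtain ⟨n, hn⟩ := finset_subset_of_monotone_iUnion hJmono F hF
    intro i hi
    refine Set.mem_iUnion.2 ⟨n + 1, ?_⟩
    rw [hJsucc]
    exact Set.mem_union_right _
      (Set.mem_iUnion.2 ⟨F, Set.mem_iUnion.2 ⟨hn, Set.mem_iUnion.2 ⟨k, hi⟩⟩⟩)
  -- Step 4: the open set Ustar with support in Jstar.
  set Ustar : Set (ι → L) :=
    ⋃ (F : Finset ι) (_ : (F : Set ι) ⊆ Jstar) (k : ℕ), (s F k : Set ι).pi (O F k) with hUstar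
  have hUstarOpen : IsOpen Ustar :=
    isOpen_iUnion fun F => isOpen_iUnion fun hF => isOpen_iUnion fun k =>
      isOpen_set_pi (s F k).finite_toSet fun i _ => hOopen F k i
  have hUstarSub : Ustar ⊆ U := Set.iUnion_subset fun F =>
    Set.iUnion_subset fun hF => Set.iUnion_subset fun k => hsub F k
  have hUstarMem : ∀ p ∈ Ustar, ∃ i ∈ Jstar, p i ≠ x i := by
    intro p hp
    rw [hUstar] at hp
    simp only [Set.mem_iUnion] at hp
    obtain ⟨F, hF, k, hpk⟩ := hp
    exact ⟨i₀ F k, hclosed F hF k (Finset.mem_coe.2 (hi₀s F k)), hi₀ F k p hpk⟩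
  have hUstarCyl : ∀ p q : ι → L, (∀ i ∈ Jstar, p i = q i) → p ∈ Ustar → q ∈ Ustar := by
    intro p q hpq hp
    rw [hUstar] at hp ⊢
    simp only [Set.mem_iUnion] at hp ⊢
    obtain ⟨F, hF, k, hpk⟩ := hp
    refine ⟨F, hF, k, fun i hi => ?_⟩
    rw [← hpq i (hclosed F hF k hi)]
    exact hpk i hi
  -- Step 5: restriction and extension maps.
  haveI : Countable ↥Jstar := hJstarc.to_subtype
  set r : (ι → L) → (↥Jstar → L) := fun w i => w ↑i with hrdef
  set e : (↥Jstar → L) → (ι → L) :=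
    fun v i => if h : i ∈ Jstar then v ⟨i, h⟩ else x i with hedef
  have hrcont : Continuous r := continuous_pi fun i => continuous_apply _
  have hecont : Continuous e := by
    apply continuous_pi
    intro i
    rw [hedef]
    by_cases h : i ∈ Jstar
    · simp only [dif_pos h]
      exact continuous_apply _
    · simp only [dif_neg h]
      exact continuous_const
  have hre : ∀ v, r (e v) = v := by
    intro v
    funext i
    rw [hrdef, hedef]
    simp only [dif_pos i.2]
  have hex : e (r x) = x := by
    funext i
    rw [hedef]
    by_cases h : i ∈ Jstar
    · simp only [dif_pos h]; rfl
    · simp only [dif_neg h]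
  -- Step 6: the density of Ustar near x (within Jstar coordinates).
  have hdense : ∀ W : Set (↥Jstar → L), IsOpen W → r x ∈ W → ∃ p ∈ Ustar, r p ∈ W := by
    intro W hWo hWx
    obtain ⟨G, O', hGO', hGsub⟩ := isOpen_pi_iff.1 hWo (r x) hWx
    set F : Finset ι := G.image Subtype.val with hFdef
    have hFJ : (F : Set ι) ⊆ Jstar := by
      intro i hi
      rw [hFdef] at hi
      simp only [Finset.coe_image, Set.mem_image, Finset.mem_coe] at hi
      obtain ⟨j, hj, rfl⟩ := hi
      exact j.2
    have hmemF : ∀ j ∈ G, (↑j : ι) ∈ F := fun j hj => by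
      rw [hFdef]; exact Finset.mem_image_of_mem _ hj
    set Ot : Set ((i : ↥F) → L) := ⋂ j ∈ G,
      (if h : (↑j : ι) ∈ F then (fun v : (i : ↥F) → L => v ⟨↑j, h⟩) ⁻¹' O' j else Set.univ)
      with hOtdef
    have hOto : IsOpen Ot := isOpen_biInter_finset fun j hj => by
      split_ifs with h
      · exact (hGO' j hj).1.preimage (continuous_apply _)
      · exact isOpen_univ
    have hOtx : (fun i : ↥F => x ↑i) ∈ Ot := by
      rw [hOtdef]
      refine Set.mem_iInter₂.2 fun j hj => ?_
      rw [dif_pos (hmemF j hj)]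
      exact (hGO' j hj).2
    obtain ⟨k, -, hk⟩ := (hWb F).toHasBasis.mem_iff.1 (hOto.mem_nhds hOtx)
    refine ⟨y F k, ?_, ?_⟩
    · rw [hUstar]
      simp only [Set.mem_iUnion]
      exact ⟨F, hFJ, k, hymem F k⟩
    · apply hGsub
      intro j hj
      have h0 := Set.mem_iInter₂.1 (by rw [hOtdef] at hk; exact hk (hyW F k)) j
        (Finset.mem_coe.1 hj)
      rw [dif_pos (hmemF j (Finset.mem_coe.1 hj))] at h0
      exact h0
  have hne : ∀ p ∈ Ustar, r p ≠ r x := by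
    intro p hp h
    obtain ⟨i, hi, hne'⟩ := hUstarMem p hp
    exact hne' (congrFun h ⟨i, hi⟩)
  have hcyl : ∀ p q : ι → L, r p = r q → p ∈ Ustar → q ∈ Ustar := fun p q h hp =>
    hUstarCyl p q (fun i hi => congrFun h ⟨i, hi⟩) hp
  obtain ⟨U₁, U₂, h1, h2, h3, h4, h5, h6, h7⟩ :=
    splitting_lemma hrcont hecont hre x hex hUstarOpen hdense hne hcyl
  exact ⟨U₁, U₂, h1, h2, h3.trans hUstarSub, h4.trans hUstarSub, h5, h6, h7⟩
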